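/- Verify the 1/2-derivation property directly: in L̃¹_{1,μ}, the linear map φ defined by φ(L_m) = α M_{m+t₀} + β Y_{m+t₀+1/2}, φ(Y_{m+1/2}) = β M_{m+t₀+1}, φ(M_m) = 0, φ(C_L) = 0 (for fixed α, β ∈ ℂ and t₀ ∈ ℤ) satisfies φ([x,y]) = (1/2)([φ(x),y] + [x,φ(y)]) for all x, y; in particular L̃¹_{1,μ} admits nontrivial 1/2-derivations. -/

import Mathlib

/-- Index set for the basis of the original deformative Schrödinger-Virasoro
algebra L̃¹_{1,μ}: `l n ↦ L_n`, `m n ↦ M_n`, `y n ↦ Y_{n+1/2}`, `c ↦ C_L`. -/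
inductive ODIdx : Type
  | l : ℤ → ODIdx
  | m : ℤ → ODIdx
  | y : ℤ → ODIdx
  | c : ODIdx

/-- Direct verification: in L̃¹_{1,μ}, the linear map φ with
φ(L_m) = α M_{m+t₀} + β Y_{m+t₀+1/2}, φ(Y_{m+1/2}) = β M_{m+t₀+1},
φ(M_m) = 0, φ(C_L) = 0 is a 1/2-derivation; in particular L̃¹_{1,μ} admits
nontrivial 1/2-derivations. -/
theorem stmt14 (V : Type*) [LieRing V] [LieAlgebra ℂ V] (b : Module.Basis ODIdx ℂ V)
    (μ : ℂ)
    (hLL : ∀ m n : ℤ, ⁅b (.l m), b (.l n)⁆ =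
      ((n - m : ℤ) : ℂ) • b (.l (m + n)) +
      (if m + n = 0 then (((m : ℂ) ^ 3 - m) / 12) else 0) • b .c)
    (hLY : ∀ m n : ℤ, ⁅b (.l m), b (.y n)⁆ =
      ((n : ℂ) + 1/2 - (m : ℂ) + μ) • b (.y (m + n)))
    (hLM : ∀ m n : ℤ, ⁅b (.l m), b (.m n)⁆ = ((n : ℂ) - (m : ℂ) + 2 * μ) • b (.m (m + n)))
    (hYY : ∀ m n : ℤ, ⁅b (.y m), b (.y n)⁆ = ((n - m : ℤ) : ℂ) • b (.m (m + n + 1)))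
    (hMM : ∀ m n : ℤ, ⁅b (.m m), b (.m n)⁆ = 0)
    (hMY : ∀ m n : ℤ, ⁅b (.m m), b (.y n)⁆ = 0)
    (hc : ∀ x : V, ⁅b .c, x⁆ = 0)
    (α β : ℂ) (t₀ : ℤ) :
    (∀ φ : V →ₗ[ℂ] V,
      (∀ m : ℤ, φ (b (.l m)) = α • b (.m (m + t₀)) + β • b (.y (m + t₀))) →
      (∀ m : ℤ, φ (b (.y m)) = β • b (.m (m + t₀ + 1))) →
      (∀ m : ℤ, φ (b (.m m)) = 0) →
      φ (b .c) = 0 →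
      ∀ x y : V, φ ⁅x, y⁆ = (1/2 : ℂ) • (⁅φ x, y⁆ + ⁅x, φ y⁆)) ∧
    (∃ φ : V →ₗ[ℂ] V,
      (∀ x y : V, φ ⁅x, y⁆ = (1/2 : ℂ) • (⁅φ x, y⁆ + ⁅x, φ y⁆)) ∧
      ∀ c : ℂ, φ ≠ c • (LinearMap.id : V →ₗ[ℂ] V)) := by
  have hxc : ∀ z : V, ⁅z, b .c⁆ = 0 := fun z => by rw [← lie_skew, hc, neg_zero]
  have hYL : ∀ m n : ℤ, ⁅b (.y n), b (.l m)⁆ =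
      -((((n : ℂ) + 1/2 - (m : ℂ) + μ)) • b (.y (m + n))) := fun m n => by
    rw [← lie_skew, hLY]
  have hML : ∀ m n : ℤ, ⁅b (.m n), b (.l m)⁆ =
      -((((n : ℂ) - (m : ℂ) + 2 * μ)) • b (.m (m + n))) := fun m n => by
    rw [← lie_skew, hLM]
  have hYM : ∀ m n : ℤ, ⁅b (.y n), b (.m m)⁆ = 0 := fun m n => by
    rw [← lie_skew, hMY, neg_zero]
  -- the right-bracket linear map
  let R : V → (V →ₗ[ℂ] V) := fun y =>
    { toFun := fun x => ⁅x, y⁆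
      map_add' := fun a c => add_lie a c y
      map_smul' := fun t a => smul_lie t a y }
  have hR : ∀ (x y : V), R y x = ⁅x, y⁆ := fun _ _ => rfl
  have gen : ∀ (α β : ℂ) (t₀ : ℤ) (φ : V →ₗ[ℂ] V),
      (∀ m : ℤ, φ (b (.l m)) = α • b (.m (m + t₀)) + β • b (.y (m + t₀))) →
      (∀ m : ℤ, φ (b (.y m)) = β • b (.m (m + t₀ + 1))) →
      (∀ m : ℤ, φ (b (.m m)) = 0) →
      φ (b .c) = 0 →
      ∀ x y : V, φ ⁅x, y⁆ = (1/2 : ℂ) • (⁅φ x, y⁆ + ⁅x, φ y⁆) := by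
    intro α β t₀ φ hφL hφY hφM hφc
    have key : ∀ i j : ODIdx, φ ⁅b i, b j⁆ =
        (1/2 : ℂ) • (⁅φ (b i), b j⁆ + ⁅b i, φ (b j)⁆) := by
      rintro (m | m | m | _) (n | n | n | _) <;>
        simp only [hLL, hLY, hLM, hYY, hMM, hMY, hc, hxc, hYL, hML, hYM, hφL, hφY, hφM, hφc,
          map_add, map_smul, map_neg, map_zero, neg_zero, neg_neg, smul_zero, add_zero, zero_add, lie_zero, zero_lie,
          smul_add, lie_smul, smul_lie, lie_neg, neg_lie, smul_neg, add_lie, lie_add,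
          neg_smul] <;>
        push_cast <;> ring_nf <;> module
    have key2 : ∀ (i : ODIdx) (y : V), φ ⁅b i, y⁆ =
        (1/2 : ℂ) • (⁅φ (b i), y⁆ + ⁅b i, φ y⁆) := by
      intro i y
      have h : (φ ∘ₗ LieAlgebra.ad ℂ V (b i)) =
          (1/2 : ℂ) • (LieAlgebra.ad ℂ V (φ (b i)) + LieAlgebra.ad ℂ V (b i) ∘ₗ φ) := by
        apply b.ext
        intro j
        simpa [LieAlgebra.ad_apply] using key i j
      simpa [LieAlgebra.ad_apply] using LinearMap.congr_fun h y
    intro x y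
    have h : (φ ∘ₗ R y) = (1/2 : ℂ) • (R y ∘ₗ φ + R (φ y)) := by
      apply b.ext
      intro i
      simpa [hR] using key2 i y
    simpa [hR] using LinearMap.congr_fun h x
  refine ⟨gen α β t₀, ?_⟩
  -- nontrivial example: α = 1, β = 0, t₀ = 0
  refine ⟨b.constr ℂ (fun i => match i with | ODIdx.l m => b (.m m) | _ => 0), ?_, ?_⟩
  · apply gen 1 0 0
    · intro m; simp [Module.Basis.constr_basis]
    · intro m; simp [Module.Basis.constr_basis]
    · intro m; simp [Module.Basis.constr_basis]
    · simp [Module.Basis.constr_basis]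
  · intro c hcid
    have h0 : (b.constr ℂ (fun i => match i with | ODIdx.l m => b (.m m) | _ => 0) : V →ₗ[ℂ] V)
        (b (.m 0)) = c • b (.m 0) := by rw [hcid]; simp
    have h1 : (b.constr ℂ (fun i => match i with | ODIdx.l m => b (.m m) | _ => 0) : V →ₗ[ℂ] V)
        (b (.l 0)) = c • b (.l 0) := by rw [hcid]; simp
    rw [Module.Basis.constr_basis] at h0 h1
    have h0' : (0 : V) = c • b (.m 0) := h0
    have h1' : b (.m 0) = c • b (.l 0) := h1
    have hc0 : c = 0 := by
      by_contra hne
      exact b.ne_zero _ ((smul_eq_zero.mp h0'.symm).resolve_left hne)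
    rw [hc0, zero_smul] at h1'
    exact b.ne_zero _ h1'
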